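/- The soft-thresholding risk τ ↦ r(τ; G) is a quasi-convex function of τ on [0, ∞); that is, for all τ₁, τ₂ ≥ 0 and α ∈ [0,1], r(ατ₁ + (1−α)τ₂; G) ≤ max(r(τ₁; G), r(τ₂; G)). -/

import Mathlib

open MeasureTheory

/-- Standard Gaussian density `φ(z) = e^{-z²/2}/√(2π)`. -/
noncomputable def gaussPDF (z : ℝ) : ℝ := Real.exp (-z ^ 2 / 2) / Real.sqrt (2 * Real.pi)

/-- Soft-thresholding function `η(x; τ) = sign(x)·max(|x| − τ, 0)`. -/
noncomputable def softThr (x τ : ℝ) : ℝ := Real.sign x * max (|x| - τ) 0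

/-- Soft-thresholding risk `r(τ; G) = E_{μ∼G, Z∼N(0,1)}[(η(μ + Z; τ) − μ)²]`. -/
noncomputable def stRisk (G : Measure ℝ) (τ : ℝ) : ℝ :=
  ∫ m, (∫ z, (softThr (m + z) τ - m) ^ 2 * gaussPDF z) ∂G

open Real Set Filter


lemma sqrt2pi_pos : 0 < Real.sqrt (2 * Real.pi) := Real.sqrt_pos.2 (by positivity)

lemma sqrt2pi_ge_one : 1 ≤ Real.sqrt (2 * Real.pi) := by
  rw [show (1:ℝ) = Real.sqrt 1 by simp]
  exact Real.sqrt_le_sqrt (by nlinarith [Real.pi_gt_three])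

lemma gaussPDF_nonneg (z : ℝ) : 0 ≤ gaussPDF z := by
  unfold gaussPDF; positivity

lemma gaussPDF_le_one (z : ℝ) : gaussPDF z ≤ 1 := by
  unfold gaussPDF
  rw [div_le_one sqrt2pi_pos]
  calc Real.exp (-z ^ 2 / 2) ≤ 1 := by
        rw [Real.exp_le_one_iff]; nlinarith [sq_nonneg z]
    _ ≤ Real.sqrt (2 * Real.pi) := sqrt2pi_ge_one

lemma gaussPDF_neg (z : ℝ) : gaussPDF (-z) = gaussPDF z := by
  unfold gaussPDF; rw [neg_pow]; norm_num

lemma continuous_gaussPDF : Continuous gaussPDF := by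
  unfold gaussPDF; fun_prop

lemma hasDerivAt_gaussPDF (z : ℝ) : HasDerivAt gaussPDF (-z * gaussPDF z) z := by
  have h1 : HasDerivAt (fun w : ℝ => -w ^ 2 / 2) (-z) z := by
    have := ((hasDerivAt_pow 2 z).neg).div_const 2
    exact this.congr_deriv (by push_cast; ring)
  have h2 := (Real.hasDerivAt_exp (-z ^ 2 / 2)).comp z h1
  have h3 := h2.div_const (Real.sqrt (2 * Real.pi))
  exact h3.congr_deriv (by unfold gaussPDF; simp [Function.comp]; ring)

lemma integrable_gaussPDF : Integrable gaussPDF := by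
  have h := (integrable_exp_neg_mul_sq (by norm_num : (0:ℝ) < 1/2)).div_const
    (Real.sqrt (2 * Real.pi))
  convert h using 2 with z
  unfold gaussPDF; ring_nf

lemma integrable_mul_gaussPDF : Integrable (fun z => z * gaussPDF z) := by
  have h := (integrable_mul_exp_neg_mul_sq (by norm_num : (0:ℝ) < 1/2)).div_const
    (Real.sqrt (2 * Real.pi))
  convert h using 2 with z
  unfold gaussPDF; ring_nf

lemma integrable_sq_mul_gaussPDF : Integrable (fun z => z ^ 2 * gaussPDF z) := by
  have h := (integrable_rpow_mul_exp_neg_mul_sq (by norm_num : (0:ℝ) < 1/2)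
    (by norm_num : (-1:ℝ) < 2)).div_const (Real.sqrt (2 * Real.pi))
  convert h using 2 with z
  rw [show ((2:ℝ) : ℝ) = ((2:ℕ) : ℝ) by norm_num, Real.rpow_natCast]
  unfold gaussPDF; ring_nf

lemma integrable_sub_sq_mul_gaussPDF (c : ℝ) :
    Integrable (fun z => (z - c) ^ 2 * gaussPDF z) := by
  have h := (integrable_sq_mul_gaussPDF.sub (integrable_mul_gaussPDF.const_mul (2*c))).add
    (integrable_gaussPDF.const_mul (c^2))
  exact h.congr (Filter.Eventually.of_forall fun z => by
    simp only [Pi.add_apply, Pi.sub_apply]; ring)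

lemma integral_gaussPDF : ∫ z, gaussPDF z = 1 := by
  unfold gaussPDF
  rw [integral_div]
  rw [show (fun z : ℝ => Real.exp (-z ^ 2 / 2)) = fun z : ℝ => Real.exp (-(1/2) * z ^ 2) by
    funext z; ring_nf]
  rw [integral_gaussian]
  rw [show Real.pi / (1/2) = 2 * Real.pi by ring]
  exact div_self (ne_of_gt sqrt2pi_pos)

lemma tendsto_sq_div_two_atTop : Tendsto (fun z : ℝ => z ^ 2 / 2) atTop atTop :=
  (tendsto_pow_atTop (by norm_num : 2 ≠ 0)).atTop_div_const (by norm_num)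

lemma tendsto_gaussPDF_atTop : Tendsto gaussPDF atTop (nhds 0) := by
  have h2 : Tendsto (fun z : ℝ => Real.exp (-(z ^ 2 / 2))) atTop (nhds 0) :=
    Real.tendsto_exp_neg_atTop_nhds_zero.comp tendsto_sq_div_two_atTop
  have h3 := h2.div_const (Real.sqrt (2 * Real.pi))
  rw [zero_div] at h3
  convert h3 using 2 with z
  unfold gaussPDF; ring_nf

lemma tendsto_mul_gaussPDF_atTop : Tendsto (fun z => z * gaussPDF z) atTop (nhds 0) := by
  have hmain : Tendsto (fun u : ℝ => u * Real.exp (-u)) atTop (nhds 0) := by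
    simpa using Real.tendsto_pow_mul_exp_neg_atTop_nhds_zero 1
  have h2 : Tendsto (fun z : ℝ => z ^ 2 / 2 * Real.exp (-(z ^ 2 / 2))) atTop (nhds 0) :=
    hmain.comp tendsto_sq_div_two_atTop
  have h4 : Tendsto (fun z : ℝ => z * Real.exp (-(z ^ 2 / 2))) atTop (nhds 0) := by
    apply tendsto_of_tendsto_of_tendsto_of_le_of_le' tendsto_const_nhds h2
    · filter_upwards [eventually_ge_atTop (0:ℝ)] with z hz
      positivity
    · filter_upwards [eventually_ge_atTop (2:ℝ)] with z hz
      have : z ≤ z ^ 2 / 2 := by nlinarith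
      exact mul_le_mul_of_nonneg_right this (Real.exp_nonneg _)
  have h5 := h4.div_const (Real.sqrt (2 * Real.pi))
  rw [zero_div] at h5
  convert h5 using 2 with z
  unfold gaussPDF; ring_nf

noncomputable def gaussQ (a : ℝ) : ℝ := ∫ z in Ioi a, gaussPDF z

lemma gaussQ_nonneg (a : ℝ) : 0 ≤ gaussQ a :=
  setIntegral_nonneg measurableSet_Ioi fun z _ => gaussPDF_nonneg z

lemma gaussQ_le_one (a : ℝ) : gaussQ a ≤ 1 := by
  rw [← integral_gaussPDF]
  exact setIntegral_le_integral integrable_gaussPDF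
    (Filter.Eventually.of_forall fun z => gaussPDF_nonneg z)

lemma gaussQ_eq (x : ℝ) : gaussQ x = 1 - ∫ z in Iic x, gaussPDF z := by
  have h := intervalIntegral.integral_Iic_add_Ioi (b := x) integrable_gaussPDF.integrableOn
    integrable_gaussPDF.integrableOn
  rw [integral_gaussPDF] at h
  unfold gaussQ; linarith

lemma hasDerivAt_gaussQ (a : ℝ) : HasDerivAt gaussQ (-gaussPDF a) a := by
  have key : gaussQ = fun x =>
      1 - ((∫ z in Iic (0:ℝ), gaussPDF z) + ∫ z in (0:ℝ)..x, gaussPDF z) := by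
    funext x
    rw [gaussQ_eq, ← intervalIntegral.integral_Iic_sub_Iic integrable_gaussPDF.integrableOn
      integrable_gaussPDF.integrableOn]
    ring
  rw [key]
  have h1 : HasDerivAt (fun x => ∫ z in (0:ℝ)..x, gaussPDF z) (gaussPDF a) a :=
    intervalIntegral.integral_hasDerivAt_right
      (integrable_gaussPDF.intervalIntegrable)
      (continuous_gaussPDF.stronglyMeasurableAtFilter _ _)
      continuous_gaussPDF.continuousAt
  simpa using (h1.const_add (∫ z in Iic (0:ℝ), gaussPDF z)).const_sub 1

lemma continuous_gaussQ : Continuous gaussQ :=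
  continuous_iff_continuousAt.2 fun a => (hasDerivAt_gaussQ a).continuousAt

lemma integral_Ioi_mul_gaussPDF (a : ℝ) : ∫ z in Ioi a, z * gaussPDF z = gaussPDF a := by
  have h := integral_Ioi_of_hasDerivAt_of_tendsto' (a := a) (m := 0)
    (f := fun z => -gaussPDF z) (f' := fun z => z * gaussPDF z)
    (fun x _ => (hasDerivAt_gaussPDF x).neg.congr_deriv (by ring))
    integrable_mul_gaussPDF.integrableOn
    (by simpa using tendsto_gaussPDF_atTop.neg)
  simpa using h

lemma tendsto_gaussQ_atTop : Tendsto gaussQ atTop (nhds 0) := by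
  apply tendsto_of_tendsto_of_tendsto_of_le_of_le' tendsto_const_nhds tendsto_gaussPDF_atTop
  · exact Filter.Eventually.of_forall fun a => gaussQ_nonneg a
  · filter_upwards [eventually_ge_atTop (1:ℝ)] with a ha
    rw [← integral_Ioi_mul_gaussPDF a]
    apply setIntegral_mono_on integrable_gaussPDF.integrableOn
      integrable_mul_gaussPDF.integrableOn measurableSet_Ioi
    intro z hz
    have hz1 : 1 ≤ z := le_of_lt (lt_of_le_of_lt ha hz)
    nlinarith [gaussPDF_nonneg z]

lemma integral_Ioi_sq_mul_gaussPDF (a c : ℝ) :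
    ∫ z in Ioi a, (z - c) ^ 2 * gaussPDF z
      = (1 + c ^ 2) * gaussQ a + (a - 2 * c) * gaussPDF a := by
  have h := integral_Ioi_of_hasDerivAt_of_tendsto' (a := a) (m := 0)
    (f := fun z => -((z - 2 * c) * gaussPDF z) - (1 + c ^ 2) * gaussQ z)
    (f' := fun z => (z - c) ^ 2 * gaussPDF z)
    (fun x _ => by
      have h1 : HasDerivAt (fun z => (z - 2 * c) * gaussPDF z)
          (1 * gaussPDF x + (x - 2 * c) * (-x * gaussPDF x)) x :=
        ((hasDerivAt_id x).sub_const _).mul (hasDerivAt_gaussPDF x)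
      have h3 := h1.neg.sub ((hasDerivAt_gaussQ x).const_mul (1 + c ^ 2))
      exact h3.congr_deriv (by ring))
    (integrable_sub_sq_mul_gaussPDF c).integrableOn
    (by
      have t1 : Tendsto (fun z => (z - 2 * c) * gaussPDF z) atTop (nhds 0) := by
        have := tendsto_mul_gaussPDF_atTop.sub (tendsto_gaussPDF_atTop.const_mul (2 * c))
        simp only [mul_zero, sub_zero] at this
        convert this using 2 with z; ring
      have := t1.neg.sub (tendsto_gaussQ_atTop.const_mul (1 + c ^ 2))
      simpa using this)
  rw [h]; ring

lemma gaussK_nonneg (τ a : ℝ) :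
    0 ≤ (1 + τ ^ 2) * gaussQ a + (a - 2 * τ) * gaussPDF a := by
  rw [← integral_Ioi_sq_mul_gaussPDF]
  exact setIntegral_nonneg measurableSet_Ioi fun z _ =>
    mul_nonneg (sq_nonneg _) (gaussPDF_nonneg z)


lemma softThr_eq (x τ : ℝ) (hτ : 0 ≤ τ) :
    softThr x τ = max (x - τ) 0 + min (x + τ) 0 := by
  unfold softThr
  rcases lt_trichotomy x 0 with hx | hx | hx
  · rw [Real.sign_of_neg hx, abs_of_neg hx]
    by_cases h : x + τ ≤ 0
    · rw [max_eq_left (by linarith), max_eq_right (by linarith), min_eq_left h]; ring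
    · push_neg at h
      rw [max_eq_right (by linarith), max_eq_right (by linarith),
        min_eq_right (by linarith)]; ring
  · subst hx
    rw [Real.sign_zero, abs_zero, zero_sub, zero_add,
      max_eq_right (by linarith), min_eq_right hτ]; ring
  · rw [Real.sign_of_pos hx, abs_of_pos hx, min_eq_right (by linarith)]; ring

noncomputable def Rfun (t m : ℝ) : ℝ :=
  (1 + t ^ 2) * (gaussQ (t - m) + gaussQ (t + m)) - (t + m) * gaussPDF (t - m)
    - (t - m) * gaussPDF (t + m) + m ^ 2 * (gaussQ (-t - m) - gaussQ (t - m))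

noncomputable def wFun (t m : ℝ) : ℝ :=
  t * (gaussQ (t - m) + gaussQ (t + m)) - (gaussPDF (t - m) + gaussPDF (t + m))

lemma eta_abs_le (x τ : ℝ) (hτ : 0 ≤ τ) : |max (x - τ) 0 + min (x + τ) 0| ≤ |x| := by
  have h1 : max (x - τ) 0 ≤ |x| :=
    max_le (le_trans (by linarith) (le_abs_self x)) (abs_nonneg x)
  have h2 : -|x| ≤ min (x + τ) 0 :=
    le_min (le_trans (neg_abs_le x) (by linarith)) (neg_nonpos.mpr (abs_nonneg x))
  have h3 : (0:ℝ) ≤ max (x - τ) 0 := le_max_right _ _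
  have h4 : min (x + τ) 0 ≤ 0 := min_le_right _ _
  rw [abs_le]; constructor <;> linarith

lemma integrable_inner (τ m : ℝ) (hτ : 0 ≤ τ) :
    Integrable (fun z => (max (m + z - τ) 0 + min (m + z + τ) 0 - m) ^ 2 * gaussPDF z) := by
  have hcont : Continuous
      (fun z => (max (m + z - τ) 0 + min (m + z + τ) 0 - m) ^ 2 * gaussPDF z) := by
    apply Continuous.mul _ continuous_gaussPDF
    apply Continuous.pow
    apply Continuous.sub _ continuous_const
    exact (((continuous_const.add continuous_id).sub continuous_const).max continuous_const).add
      (((continuous_const.add continuous_id).add continuous_const).min continuous_const)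
  have hBint : Integrable (fun z : ℝ => (6 * m ^ 2 + 4 * z ^ 2) * gaussPDF z) := by
    have := (integrable_gaussPDF.const_mul (6 * m ^ 2)).add
      (integrable_sq_mul_gaussPDF.const_mul 4)
    exact this.congr (Filter.Eventually.of_forall fun z => by simp only [Pi.add_apply]; ring)
  apply Integrable.mono' hBint hcont.aestronglyMeasurable
  apply Filter.Eventually.of_forall
  intro z
  rw [Real.norm_eq_abs, abs_mul, abs_of_nonneg (gaussPDF_nonneg z), abs_of_nonneg (sq_nonneg _)]
  apply mul_le_mul_of_nonneg_right _ (gaussPDF_nonneg z)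
  have hη := eta_abs_le (m + z) τ hτ
  have hη2 : (max (m + z - τ) 0 + min (m + z + τ) 0) ^ 2 ≤ (m + z) ^ 2 := by
    have h := pow_le_pow_left₀ (abs_nonneg _) hη 2
    rwa [sq_abs, sq_abs] at h
  nlinarith [hη2, sq_nonneg (max (m + z - τ) 0 + min (m + z + τ) 0 + m), sq_nonneg (m - z),
    sq_nonneg (m + z)]

lemma inner_eq (τ m : ℝ) (hτ : 0 ≤ τ) :
    ∫ z, (softThr (m + z) τ - m) ^ 2 * gaussPDF z = Rfun τ m := by
  have hgfun : (fun z => (softThr (m + z) τ - m) ^ 2 * gaussPDF z)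
      = fun z => (max (m + z - τ) 0 + min (m + z + τ) 0 - m) ^ 2 * gaussPDF z := by
    funext z
    rw [softThr_eq _ _ hτ]
  rw [hgfun]
  set g := fun z => (max (m + z - τ) 0 + min (m + z + τ) 0 - m) ^ 2 * gaussPDF z with hgdef
  have hg : Integrable g := integrable_inner τ m hτ
  have hbc : -τ - m ≤ τ - m := by linarith
  have h1 := intervalIntegral.integral_Iic_add_Ioi (b := -τ - m)
    hg.integrableOn hg.integrableOn
  have h2 : (∫ z in Ioi (-τ - m), g z)
      = (∫ z in Ioc (-τ - m) (τ - m), g z) + ∫ z in Ioi (τ - m), g z := by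
    rw [← setIntegral_union (Ioc_disjoint_Ioi le_rfl) measurableSet_Ioi
      hg.integrableOn hg.integrableOn, Ioc_union_Ioi_eq_Ioi hbc]
  have e1 : (∫ z in Iic (-τ - m), g z)
      = (1 + τ ^ 2) * gaussQ (τ + m) + ((τ + m) - 2 * τ) * gaussPDF (τ + m) := by
    rw [show -τ - m = -(τ + m) by ring, ← integral_comp_neg_Ioi]
    rw [show (∫ x in Ioi (τ + m), g (-x))
        = ∫ x in Ioi (τ + m), (x - τ) ^ 2 * gaussPDF x from
      setIntegral_congr_fun measurableSet_Ioi fun x hx => by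
        have hx' : τ + m < x := hx
        simp only [hgdef]
        rw [max_eq_right (by linarith), min_eq_left (by linarith), gaussPDF_neg]
        ring]
    exact integral_Ioi_sq_mul_gaussPDF (τ + m) τ
  have e2 : (∫ z in Ioc (-τ - m) (τ - m), g z)
      = m ^ 2 * (gaussQ (-τ - m) - gaussQ (τ - m)) := by
    rw [show (∫ z in Ioc (-τ - m) (τ - m), g z)
        = ∫ z in Ioc (-τ - m) (τ - m), m ^ 2 * gaussPDF z from
      setIntegral_congr_fun measurableSet_Ioc fun z hz => by
        obtain ⟨hz1, hz2⟩ := hz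
        simp only [hgdef]
        rw [max_eq_right (by linarith), min_eq_right (by linarith)]
        ring]
    rw [integral_const_mul]
    congr 1
    have h3 := setIntegral_union (f := gaussPDF) (s := Ioc (-τ - m) (τ - m)) (t := Ioi (τ - m)) (Ioc_disjoint_Ioi le_rfl) measurableSet_Ioi
      integrable_gaussPDF.integrableOn integrable_gaussPDF.integrableOn
    rw [Ioc_union_Ioi_eq_Ioi hbc] at h3
    unfold gaussQ
    linarith [h3]
  have e3 : (∫ z in Ioi (τ - m), g z)
      = (1 + τ ^ 2) * gaussQ (τ - m) + ((τ - m) - 2 * τ) * gaussPDF (τ - m) := by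
    rw [show (∫ z in Ioi (τ - m), g z)
        = ∫ z in Ioi (τ - m), (z - τ) ^ 2 * gaussPDF z from
      setIntegral_congr_fun measurableSet_Ioi fun z hz => by
        have hz' : τ - m < z := hz
        simp only [hgdef]
        rw [max_eq_left (by linarith), min_eq_right (by linarith)]
        ring]
    exact integral_Ioi_sq_mul_gaussPDF (τ - m) τ
  rw [← h1, h2, e1, e2, e3]
  unfold Rfun
  ring

lemma hQsub (m τ : ℝ) : HasDerivAt (fun t => gaussQ (t - m)) (-gaussPDF (τ - m)) τ := by
  have h := (hasDerivAt_gaussQ (τ - m)).comp τ ((hasDerivAt_id τ).sub_const m)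
  exact h.congr_deriv (by ring)

lemma hQadd (m τ : ℝ) : HasDerivAt (fun t => gaussQ (t + m)) (-gaussPDF (τ + m)) τ := by
  have h := (hasDerivAt_gaussQ (τ + m)).comp τ ((hasDerivAt_id τ).add_const m)
  exact h.congr_deriv (by ring)

lemma hQneg (m τ : ℝ) : HasDerivAt (fun t => gaussQ (-t - m)) (gaussPDF (τ + m)) τ := by
  have h0 : HasDerivAt (fun t : ℝ => -t - m) (-1) τ := ((hasDerivAt_id τ).neg).sub_const m
  have h := (hasDerivAt_gaussQ (-τ - m)).comp τ h0
  have : gaussPDF (-τ - m) = gaussPDF (τ + m) := by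
    rw [show -τ - m = -(τ + m) by ring, gaussPDF_neg]
  exact h.congr_deriv (by rw [this]; ring)

lemma hPsub (m τ : ℝ) :
    HasDerivAt (fun t => gaussPDF (t - m)) (-(τ - m) * gaussPDF (τ - m)) τ := by
  have h := (hasDerivAt_gaussPDF (τ - m)).comp τ ((hasDerivAt_id τ).sub_const m)
  exact h.congr_deriv (by ring)

lemma hPadd (m τ : ℝ) :
    HasDerivAt (fun t => gaussPDF (t + m)) (-(τ + m) * gaussPDF (τ + m)) τ := by
  have h := (hasDerivAt_gaussPDF (τ + m)).comp τ ((hasDerivAt_id τ).add_const m)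
  exact h.congr_deriv (by ring)

lemma hasDerivAt_Rfun (m τ : ℝ) : HasDerivAt (fun t => Rfun t m) (2 * wFun τ m) τ := by
  have hA : HasDerivAt (fun t : ℝ => (1 + t ^ 2) * (gaussQ (t - m) + gaussQ (t + m)))
      ((2 : ℕ) * τ ^ 1 * (gaussQ (τ - m) + gaussQ (τ + m))
        + (1 + τ ^ 2) * (-gaussPDF (τ - m) + -gaussPDF (τ + m))) τ :=
    ((hasDerivAt_pow 2 τ).const_add 1).mul ((hQsub m τ).add (hQadd m τ))
  have hB : HasDerivAt (fun t : ℝ => (t + m) * gaussPDF (t - m))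
      (1 * gaussPDF (τ - m) + (τ + m) * (-(τ - m) * gaussPDF (τ - m))) τ :=
    ((hasDerivAt_id τ).add_const m).mul (hPsub m τ)
  have hC : HasDerivAt (fun t : ℝ => (t - m) * gaussPDF (t + m))
      (1 * gaussPDF (τ + m) + (τ - m) * (-(τ + m) * gaussPDF (τ + m))) τ :=
    ((hasDerivAt_id τ).sub_const m).mul (hPadd m τ)
  have hD : HasDerivAt (fun t : ℝ => m ^ 2 * (gaussQ (-t - m) - gaussQ (t - m)))
      (m ^ 2 * (gaussPDF (τ + m) - -gaussPDF (τ - m))) τ :=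
    ((hQneg m τ).sub (hQsub m τ)).const_mul (m ^ 2)
  have htot := ((hA.sub hB).sub hC).add hD
  have : (fun t : ℝ => Rfun t m) = fun t : ℝ =>
      (1 + t ^ 2) * (gaussQ (t - m) + gaussQ (t + m)) - (t + m) * gaussPDF (t - m)
        - (t - m) * gaussPDF (t + m) + m ^ 2 * (gaussQ (-t - m) - gaussQ (t - m)) := rfl
  rw [this]
  exact htot.congr_deriv (by unfold wFun; push_cast; ring)

lemma hasDerivAt_expw (m τ : ℝ) :
    HasDerivAt (fun t => Real.exp (t ^ 2 / 2) * wFun t m)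
      (Real.exp (τ ^ 2 / 2) *
        (((1 + τ ^ 2) * gaussQ (τ - m) + ((τ - m) - 2 * τ) * gaussPDF (τ - m))
          + ((1 + τ ^ 2) * gaussQ (τ + m) + ((τ + m) - 2 * τ) * gaussPDF (τ + m)))) τ := by
  have hE : HasDerivAt (fun t : ℝ => Real.exp (t ^ 2 / 2))
      (Real.exp (τ ^ 2 / 2) * ((2 : ℕ) * τ ^ 1 / 2)) τ :=
    by have h := (Real.hasDerivAt_exp (τ ^ 2 / 2)).comp τ ((hasDerivAt_pow 2 τ).div_const 2)
       exact h.congr_deriv (by norm_num)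
  have hw : HasDerivAt (fun t => wFun t m)
      (1 * (gaussQ (τ - m) + gaussQ (τ + m)) + τ * (-gaussPDF (τ - m) + -gaussPDF (τ + m))
        - (-(τ - m) * gaussPDF (τ - m) + -(τ + m) * gaussPDF (τ + m))) τ := by
    have : (fun t => wFun t m) = fun t : ℝ =>
        t * (gaussQ (t - m) + gaussQ (t + m)) - (gaussPDF (t - m) + gaussPDF (t + m)) := rfl
    rw [this]
    exact ((hasDerivAt_id τ).mul ((hQsub m τ).add (hQadd m τ))).sub
      ((hPsub m τ).add (hPadd m τ))
  exact (hE.mul hw).congr_deriv (by unfold wFun; push_cast; ring)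

lemma monotone_expw (m : ℝ) : Monotone (fun t => Real.exp (t ^ 2 / 2) * wFun t m) := by
  apply monotone_of_deriv_nonneg
  · intro τ; exact (hasDerivAt_expw m τ).differentiableAt
  · intro τ
    rw [(hasDerivAt_expw m τ).deriv]
    exact mul_nonneg (Real.exp_nonneg _)
      (add_nonneg (gaussK_nonneg τ (τ - m)) (gaussK_nonneg τ (τ + m)))

lemma abs_wFun_le (τ m : ℝ) : |wFun τ m| ≤ 2 * |τ| + 2 := by
  unfold wFun
  have q1 := gaussQ_nonneg (τ - m); have q2 := gaussQ_nonneg (τ + m)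
  have q3 := gaussQ_le_one (τ - m); have q4 := gaussQ_le_one (τ + m)
  have p1 := gaussPDF_nonneg (τ - m); have p2 := gaussPDF_nonneg (τ + m)
  have p3 := gaussPDF_le_one (τ - m); have p4 := gaussPDF_le_one (τ + m)
  have h1 : |τ * (gaussQ (τ - m) + gaussQ (τ + m))| ≤ 2 * |τ| := by
    rw [abs_mul]
    calc |τ| * |gaussQ (τ - m) + gaussQ (τ + m)| ≤ |τ| * 2 := by
          apply mul_le_mul_of_nonneg_left _ (abs_nonneg τ)
          rw [abs_of_nonneg (by linarith)]; linarith
      _ = 2 * |τ| := by ring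
  have h2 : |gaussPDF (τ - m) + gaussPDF (τ + m)| ≤ 2 := by
    rw [abs_of_nonneg (by linarith)]; linarith
  calc |τ * (gaussQ (τ - m) + gaussQ (τ + m)) - (gaussPDF (τ - m) + gaussPDF (τ + m))|
      ≤ |τ * (gaussQ (τ - m) + gaussQ (τ + m))| + |gaussPDF (τ - m) + gaussPDF (τ + m)| :=
        abs_sub _ _
    _ ≤ 2 * |τ| + 2 := by linarith

lemma continuous_wFun_m (τ : ℝ) : Continuous (fun m => wFun τ m) := by
  unfold wFun
  exact ((continuous_const.mul ((continuous_gaussQ.comp (continuous_const.sub continuous_id)).add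
    (continuous_gaussQ.comp (continuous_const.add continuous_id))))).sub
    ((continuous_gaussPDF.comp (continuous_const.sub continuous_id)).add
      (continuous_gaussPDF.comp (continuous_const.add continuous_id)))

lemma continuous_Rfun_m (τ : ℝ) : Continuous (fun m => Rfun τ m) := by
  unfold Rfun
  have cQs : Continuous (fun m : ℝ => gaussQ (τ - m)) :=
    continuous_gaussQ.comp (continuous_const.sub continuous_id)
  have cQa : Continuous (fun m : ℝ => gaussQ (τ + m)) :=
    continuous_gaussQ.comp (continuous_const.add continuous_id)
  have cQn : Continuous (fun m : ℝ => gaussQ (-τ - m)) :=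
    continuous_gaussQ.comp (continuous_const.sub continuous_id)
  have cPs : Continuous (fun m : ℝ => gaussPDF (τ - m)) :=
    continuous_gaussPDF.comp (continuous_const.sub continuous_id)
  have cPa : Continuous (fun m : ℝ => gaussPDF (τ + m)) :=
    continuous_gaussPDF.comp (continuous_const.add continuous_id)
  exact (((continuous_const.mul (cQs.add cQa)).sub
    ((continuous_const.add continuous_id).mul cPs)).sub
    ((continuous_const.sub continuous_id).mul cPa)).add
    ((continuous_id.pow 2).mul (cQn.sub cQs))

lemma abs_Rfun_le (τ m : ℝ) : |Rfun τ m| ≤ 4 * (1 + τ ^ 2) + 2 + 4 * m ^ 2 := by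
  unfold Rfun
  have q1 := gaussQ_nonneg (τ - m); have q2 := gaussQ_nonneg (τ + m)
  have q3 := gaussQ_le_one (τ - m); have q4 := gaussQ_le_one (τ + m)
  have q5 := gaussQ_nonneg (-τ - m); have q6 := gaussQ_le_one (-τ - m)
  have p1 := gaussPDF_nonneg (τ - m); have p2 := gaussPDF_nonneg (τ + m)
  have p3 := gaussPDF_le_one (τ - m); have p4 := gaussPDF_le_one (τ + m)
  have hm : |m| ≤ 1 + m ^ 2 := by nlinarith [abs_nonneg m, sq_abs m]
  have ht : |τ| ≤ 1 + τ ^ 2 := by nlinarith [abs_nonneg τ, sq_abs τ]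
  have e1 : |(1 + τ ^ 2) * (gaussQ (τ - m) + gaussQ (τ + m))| ≤ 2 * (1 + τ ^ 2) := by
    rw [abs_mul, abs_of_nonneg (by positivity : (0:ℝ) ≤ 1 + τ ^ 2),
      abs_of_nonneg (by linarith)]
    nlinarith [sq_nonneg τ]
  have e2 : |(τ + m) * gaussPDF (τ - m)| ≤ |τ| + |m| := by
    rw [abs_mul]
    calc |τ + m| * |gaussPDF (τ - m)| ≤ |τ + m| * 1 := by
          apply mul_le_mul_of_nonneg_left _ (abs_nonneg _)
          rw [abs_of_nonneg p1]; exact p3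
      _ = |τ + m| := by ring
      _ ≤ |τ| + |m| := abs_add_le τ m
  have e3 : |(τ - m) * gaussPDF (τ + m)| ≤ |τ| + |m| := by
    rw [abs_mul]
    calc |τ - m| * |gaussPDF (τ + m)| ≤ |τ - m| * 1 := by
          apply mul_le_mul_of_nonneg_left _ (abs_nonneg _)
          rw [abs_of_nonneg p2]; exact p4
      _ = |τ - m| := by ring
      _ ≤ |τ| + |m| := abs_sub τ m
  have e4 : |m ^ 2 * (gaussQ (-τ - m) - gaussQ (τ - m))| ≤ m ^ 2 := by
    rw [abs_mul, abs_of_nonneg (sq_nonneg m)]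
    calc m ^ 2 * |gaussQ (-τ - m) - gaussQ (τ - m)| ≤ m ^ 2 * 1 := by
          apply mul_le_mul_of_nonneg_left _ (sq_nonneg m)
          rw [abs_le]; constructor <;> linarith
      _ = m ^ 2 := by ring
  calc |(1 + τ ^ 2) * (gaussQ (τ - m) + gaussQ (τ + m)) - (τ + m) * gaussPDF (τ - m)
        - (τ - m) * gaussPDF (τ + m) + m ^ 2 * (gaussQ (-τ - m) - gaussQ (τ - m))|
      ≤ |(1 + τ ^ 2) * (gaussQ (τ - m) + gaussQ (τ + m)) - (τ + m) * gaussPDF (τ - m)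
        - (τ - m) * gaussPDF (τ + m)| + |m ^ 2 * (gaussQ (-τ - m) - gaussQ (τ - m))| :=
        abs_add_le _ _
    _ ≤ |(1 + τ ^ 2) * (gaussQ (τ - m) + gaussQ (τ + m)) - (τ + m) * gaussPDF (τ - m)|
        + |(τ - m) * gaussPDF (τ + m)| + |m ^ 2 * (gaussQ (-τ - m) - gaussQ (τ - m))| := by
        linarith [abs_sub ((1 + τ ^ 2) * (gaussQ (τ - m) + gaussQ (τ + m))
          - (τ + m) * gaussPDF (τ - m)) ((τ - m) * gaussPDF (τ + m))]
    _ ≤ |(1 + τ ^ 2) * (gaussQ (τ - m) + gaussQ (τ + m))| + |(τ + m) * gaussPDF (τ - m)|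
        + |(τ - m) * gaussPDF (τ + m)| + |m ^ 2 * (gaussQ (-τ - m) - gaussQ (τ - m))| := by
        linarith [abs_sub ((1 + τ ^ 2) * (gaussQ (τ - m) + gaussQ (τ + m)))
          ((τ + m) * gaussPDF (τ - m))]
    _ ≤ 4 * (1 + τ ^ 2) + 2 + 4 * m ^ 2 := by nlinarith [sq_nonneg m, sq_nonneg τ]

section MeasurePart

variable (G : Measure ℝ) [IsProbabilityMeasure G]

lemma integrable_wFun_G (τ : ℝ) : Integrable (fun m => wFun τ m) G := by
  apply Integrable.mono' (integrable_const (2 * |τ| + 2))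
    (continuous_wFun_m τ).aestronglyMeasurable
  exact Filter.Eventually.of_forall fun m => by
    rw [Real.norm_eq_abs]; exact abs_wFun_le τ m

lemma integrable_Rfun_G (hG : Integrable (fun m => m ^ 2) G) (τ : ℝ) :
    Integrable (fun m => Rfun τ m) G := by
  apply Integrable.mono' ((integrable_const (4 * (1 + τ ^ 2) + 2)).add (hG.const_mul 4))
    (continuous_Rfun_m τ).aestronglyMeasurable
  exact Filter.Eventually.of_forall fun m => by
    rw [Real.norm_eq_abs]
    have := abs_Rfun_le τ m
    simp only [Pi.add_apply]
    linarith

lemma hasDerivAt_rr (hG : Integrable (fun m => m ^ 2) G) (τ₀ : ℝ) :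
    HasDerivAt (fun t => ∫ m, Rfun t m ∂G) (2 * ∫ m, wFun τ₀ m ∂G) τ₀ := by
  have key := hasDerivAt_integral_of_dominated_loc_of_deriv_le (μ := G) (x₀ := τ₀)
    (F := fun t m => Rfun t m) (F' := fun t m => 2 * wFun t m)
    (bound := fun _ => 2 * (2 * (|τ₀| + 1) + 2)) (Metric.ball_mem_nhds τ₀ one_pos)
    (Filter.Eventually.of_forall fun t => (continuous_Rfun_m t).aestronglyMeasurable)
    (integrable_Rfun_G G hG τ₀)
    ((continuous_const.mul (continuous_wFun_m τ₀)).aestronglyMeasurable)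
    (Filter.Eventually.of_forall fun m => fun x hx => by
      rw [Real.norm_eq_abs, abs_mul, abs_two]
      have hx' : |x - τ₀| < 1 := by
        rw [Metric.mem_ball, Real.dist_eq] at hx; exact hx
      have hxb : |x| ≤ |τ₀| + 1 := by
        have := abs_sub_abs_le_abs_sub x τ₀
        linarith
      have := abs_wFun_le x m
      show 2 * |wFun x m| ≤ 2 * (2 * (|τ₀| + 1) + 2)
      linarith)
    (integrable_const _)
    (Filter.Eventually.of_forall fun m => fun x _ => hasDerivAt_Rfun m x)
  have h2 := key.2
  rw [show (∫ m, 2 * wFun τ₀ m ∂G) = 2 * ∫ m, wFun τ₀ m ∂G from integral_const_mul 2 _] at h2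
  exact h2

lemma wInt_cross {σ σ' : ℝ} (h : σ ≤ σ') (h0 : 0 ≤ ∫ m, wFun σ m ∂G) :
    0 ≤ ∫ m, wFun σ' m ∂G := by
  have hmono : (∫ m, Real.exp (σ ^ 2 / 2) * wFun σ m ∂G)
      ≤ ∫ m, Real.exp (σ' ^ 2 / 2) * wFun σ' m ∂G :=
    integral_mono ((integrable_wFun_G G σ).const_mul _) ((integrable_wFun_G G σ').const_mul _)
      (fun m => monotone_expw m h)
  rw [integral_const_mul, integral_const_mul] at hmono
  have h1 : 0 ≤ Real.exp (σ ^ 2 / 2) * ∫ m, wFun σ m ∂G :=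
    mul_nonneg (Real.exp_nonneg _) h0
  nlinarith [Real.exp_pos (σ' ^ 2 / 2)]

end MeasurePart

/-- the soft-thresholding risk `τ ↦ r(τ; G)` is quasi-convex on `[0, ∞)`. -/
theorem stRisk_quasiconvex (G : Measure ℝ) [IsProbabilityMeasure G]
    (hG : Integrable (fun m => m ^ 2) G) :
    ∀ τ₁ τ₂ α : ℝ, 0 ≤ τ₁ → 0 ≤ τ₂ → 0 ≤ α → α ≤ 1 →
      stRisk G (α * τ₁ + (1 - α) * τ₂) ≤ max (stRisk G τ₁) (stRisk G τ₂) := by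
  intro τ₁ τ₂ α h1 h2 h3 h4
  have h1α : (0:ℝ) ≤ 1 - α := by linarith
  set rr : ℝ → ℝ := fun t => ∫ m, Rfun t m ∂G with hrr
  have hstR : ∀ t, 0 ≤ t → stRisk G t = rr t := fun t ht => by
    unfold stRisk
    exact integral_congr_ae (Filter.Eventually.of_forall fun m => inner_eq t m ht)
  have hdiff : ∀ t, HasDerivAt rr (2 * ∫ m, wFun t m ∂G) t := fun t => hasDerivAt_rr G hG t
  have hderiv : ∀ t, deriv rr t = 2 * ∫ m, wFun t m ∂G := fun t => (hdiff t).deriv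
  have hdiffable : Differentiable ℝ rr := fun t => (hdiff t).differentiableAt
  have hcont : Continuous rr := hdiffable.continuous
  set a := min τ₁ τ₂ with ha
  set b := max τ₁ τ₂ with hb
  set t := α * τ₁ + (1 - α) * τ₂ with htdef
  have ha1 : a ≤ τ₁ := min_le_left _ _
  have ha2 : a ≤ τ₂ := min_le_right _ _
  have hb1 : τ₁ ≤ b := le_max_left _ _
  have hb2 : τ₂ ≤ b := le_max_right _ _
  have hat : a ≤ t := by
    nlinarith [mul_nonneg h3 (sub_nonneg.mpr ha1), mul_nonneg h1α (sub_nonneg.mpr ha2)]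
  have htb : t ≤ b := by
    nlinarith [mul_nonneg h3 (sub_nonneg.mpr hb1), mul_nonneg h1α (sub_nonneg.mpr hb2)]
  have ht0 : 0 ≤ t := by
    nlinarith [mul_nonneg h3 h1, mul_nonneg h1α h2]
  rw [hstR t ht0, hstR τ₁ h1, hstR τ₂ h2]
  have hbmax : rr b ≤ max (rr τ₁) (rr τ₂) := by
    rcases max_cases τ₁ τ₂ with ⟨hm, _⟩ | ⟨hm, _⟩
    · rw [hb, hm]; exact le_max_left _ _
    · rw [hb, hm]; exact le_max_right _ _
  have hamax : rr a ≤ max (rr τ₁) (rr τ₂) := by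
    rcases min_cases τ₁ τ₂ with ⟨hm, _⟩ | ⟨hm, _⟩
    · rw [ha, hm]; exact le_max_left _ _
    · rw [ha, hm]; exact le_max_right _ _
  by_cases hc : ∃ s ∈ Icc a t, 0 ≤ ∫ m, wFun s m ∂G
  · obtain ⟨s, hs, hs0⟩ := hc
    have hmono : MonotoneOn rr (Icc t b) := by
      apply monotoneOn_of_deriv_nonneg (convex_Icc t b) hcont.continuousOn
        hdiffable.differentiableOn
      intro x hx
      rw [interior_Icc] at hx
      rw [hderiv x]
      have : 0 ≤ ∫ m, wFun x m ∂G := wInt_cross G (le_trans hs.2 (le_of_lt hx.1)) hs0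
      linarith
    have h := hmono (left_mem_Icc.mpr htb) (right_mem_Icc.mpr htb) htb
    linarith
  · push_neg at hc
    have hanti : AntitoneOn rr (Icc a t) := by
      apply antitoneOn_of_deriv_nonpos (convex_Icc a t) hcont.continuousOn
        hdiffable.differentiableOn
      intro x hx
      rw [interior_Icc] at hx
      rw [hderiv x]
      have := hc x ⟨le_of_lt hx.1, le_of_lt hx.2⟩
      linarith
    have h := hanti (left_mem_Icc.mpr hat) (right_mem_Icc.mpr hat) hat
    linarith
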